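/- arXiv:2105.00581 — 6 statements merged into one kernel-verified Lean document; each statement's English description precedes it below -/
import Mathlib

section
/- Let S₁ and S₀ be disjoint finite index sets with n_s = |S₁| + |S₀| > 0. Let X_i ∈ 𝒳 and w_i ∈ ℝ for i ∈ S₁ ∪ S₀, let μ₀, μ₁ : 𝒳 → ℝ, define m(x) = (μ₀(x) + μ₁(x))/2 and τ(x) = μ₁(x) − μ₀(x), let ε_i ∈ ℝ, and set Y_i = μ₁(X_i) + ε_i for i ∈ S₁ and Y_i = μ₀(X_i) + ε_i for i ∈ S₀. For any d : 𝒳 → {0,1} ⊂ ℝ define V̂(d) = (1/n_s) Σ_{i∈S₁} w_i d(X_i) Y_i + (1/n_s) Σ_{i∈S₀} w_i (1 − d(X_i)) Y_i. Then for any two rules d*, d : 𝒳 → {0,1}: V̂(d*) − V̂(d) = (1/(2 n_s)) [ Σ_{i∈S₁} w_i (d*(X_i) − d(X_i)) τ(X_i) + Σ_{i∈S₀} w_i (d*(X_i) − d(X_i)) τ(X_i) ] + (1/n_s) [ Σ_{i∈S₁} w_i (d*(X_i) − d(X_i)) m(X_i) − Σ_{i∈S₀} w_i (d*(X_i) − d(X_i))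 m(X_i) ] + (1/n_s) [ Σ_{i∈S₁} w_i (d*(X_i) − d(X_i)) ε_i − Σ_{i∈S₀} w_i (d*(X_i) − d(X_i)) ε_i ]. -/
open scoped BigOperators

/-- **Decomposition of the difference of weighted value estimates between two rules.**
`V̂(d*) − V̂(d)` splits into a CATE term, a main-effect imbalance term between the weighted
treated and control groups, and a noise term, where `m = (μ₀ + μ₁)/2` and `τ = μ₁ − μ₀`. -/
theorem value_difference_decomposition
    {𝒳 ι : Type*} (S1 S0 : Finset ι) (h10 : Disjoint S1 S0)
    (X : ι → 𝒳) (w : ι → ℝ)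
    (μ0 μ1 : 𝒳 → ℝ)
    (m τ : 𝒳 → ℝ)
    (hm : ∀ x, m x = (μ0 x + μ1 x) / 2) (hτ : ∀ x, τ x = μ1 x - μ0 x)
    (ε : ι → ℝ) (Y : ι → ℝ)
    (hY1 : ∀ i ∈ S1, Y i = μ1 (X i) + ε i)
    (hY0 : ∀ i ∈ S0, Y i = μ0 (X i) + ε i)
    (ns : ℕ) (hns : ns = S1.card + S0.card) (hns0 : 0 < ns)
    (dstar d : 𝒳 → ℝ)
    (hdstar : ∀ x, dstar x = 0 ∨ dstar x = 1) (hd : ∀ x, d x = 0 ∨ d x = 1) :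
    ((1 / (ns : ℝ)) * ∑ i ∈ S1, w i * dstar (X i) * Y i
        + (1 / (ns : ℝ)) * ∑ i ∈ S0, w i * (1 - dstar (X i)) * Y i)
      - ((1 / (ns : ℝ)) * ∑ i ∈ S1, w i * d (X i) * Y i
        + (1 / (ns : ℝ)) * ∑ i ∈ S0, w i * (1 - d (X i)) * Y i)
    = (1 / (2 * (ns : ℝ)))
        * (∑ i ∈ S1, w i * (dstar (X i) - d (X i)) * τ (X i)
          + ∑ i ∈ S0, w i * (dstar (X i) - d (X i)) * τ (X i))
      + (1 / (ns : ℝ))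
        * (∑ i ∈ S1, w i * (dstar (X i) - d (X i)) * m (X i)
          - ∑ i ∈ S0, w i * (dstar (X i) - d (X i)) * m (X i))
      + (1 / (ns : ℝ))
        * (∑ i ∈ S1, w i * (dstar (X i) - d (X i)) * ε i
          - ∑ i ∈ S0, w i * (dstar (X i) - d (X i)) * ε i) := by
  have e1 : ∑ i ∈ S1, w i * dstar (X i) * Y i - ∑ i ∈ S1, w i * d (X i) * Y i
      = ∑ i ∈ S1, ((1/2) * (w i * (dstar (X i) - d (X i)) * τ (X i))
          + w i * (dstar (X i) - d (X i)) * m (X i)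
          + w i * (dstar (X i) - d (X i)) * ε i) := by
    rw [← Finset.sum_sub_distrib]
    refine Finset.sum_congr rfl fun i hi => ?_
    rw [hY1 i hi, hm, hτ]; ring
  have e0 : ∑ i ∈ S0, w i * (1 - dstar (X i)) * Y i - ∑ i ∈ S0, w i * (1 - d (X i)) * Y i
      = ∑ i ∈ S0, ((1/2) * (w i * (dstar (X i) - d (X i)) * τ (X i))
          - w i * (dstar (X i) - d (X i)) * m (X i)
          - w i * (dstar (X i) - d (X i)) * ε i) := by
    rw [← Finset.sum_sub_distrib]
    refine Finset.sum_congr rfl fun i hi => ?_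
    rw [hY0 i hi, hm, hτ]; ring
  have h : ((1 / (ns : ℝ)) * ∑ i ∈ S1, w i * dstar (X i) * Y i
        + (1 / (ns : ℝ)) * ∑ i ∈ S0, w i * (1 - dstar (X i)) * Y i)
      - ((1 / (ns : ℝ)) * ∑ i ∈ S1, w i * d (X i) * Y i
        + (1 / (ns : ℝ)) * ∑ i ∈ S0, w i * (1 - d (X i)) * Y i)
      = (1 / (ns : ℝ)) * (∑ i ∈ S1, w i * dstar (X i) * Y i - ∑ i ∈ S1, w i * d (X i) * Y i)
        + (1 / (ns : ℝ)) * (∑ i ∈ S0, w i * (1 - dstar (X i)) * Y i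
            - ∑ i ∈ S0, w i * (1 - d (X i)) * Y i) := by ring
  rw [h, e1, e0]
  simp only [Finset.sum_add_distrib, Finset.sum_sub_distrib, ← Finset.mul_sum]
  ring
end

section
/- Let H be a real Hilbert space, and let S₁, S₀ and T be pairwise disjoint finite index sets with feature vectors φ_i ∈ H for each index i. Let n_s = |S₁| + |S₀| > 0, n_t = |T| > 0, α ∈ ℝ, λ ∈ ℝ, and let w = (w_i)_{i∈S₁∪S₀} ∈ ℝ^{n_s}. Define u₁ = (1/n_s) Σ_{i∈S₁} w_i φ_i, u₀ = (1/n_s) Σ_{i∈S₀} w_i φ_i, t = (1/n_t) Σ_{i∈T} φ_i, and K(i,j) = ⟪φ_i, φ_j⟫_H. Then α ‖u₁ − t‖² + α ‖u₀ − t‖² + (1 − α) ‖u₁ − u₀‖² + (λ/n_s²) Σ_{i∈S₁∪S₀} w_i² = wᵀ Σ w − 2 bᵀ w + c, where Σ is the block matrix (1/n_s²) [[K_{S₁S₁} + λ I, (α−1) K_{S₁S₀}], [(α−1) K_{S₀S₁}, K_{S₀S₀} + λ I]] with K_{S_a S_{a'}} = (K(i,j))_{i∈S_a, j∈S_{a'}},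 b = (α/(n_s n_t)) [K_{S₁T} 𝟏; K_{S₀T} 𝟏] with K_{S_a T} = (K(i,j))_{i∈S_a, j∈T} and 𝟏 the all-ones vector, and c = (2α/n_t²) Σ_{i∈T} Σ_{j∈T} K(i,j). -/
open scoped BigOperators

set_option maxHeartbeats 1000000 in
/-- **Finite-sample quadratic-form representation of the balancing objective.** The three-way
balancing objective — a convex combination (parameter `α`) of the squared MMDs between the
weighted treated group and the target, the weighted control group and the target, and the
weighted treated and control groups, plus a ridge penalty — equals `wᵀ Σ w − 2 bᵀ w + c` with
the block Gram matrix `Σ`, the vector `b` and the constant `c` given explicitly. -/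
theorem balancing_objective_quadratic_form
    {H : Type*} [NormedAddCommGroup H] [InnerProductSpace ℝ H]
    {ι1 ι0 ιT : Type*} [Fintype ι1] [Fintype ι0] [Fintype ιT]
    [DecidableEq ι1] [DecidableEq ι0]
    (φ1 : ι1 → H) (φ0 : ι0 → H) (φT : ιT → H)
    (ns nt : ℕ) (hns : ns = Fintype.card ι1 + Fintype.card ι0)
    (hnt : nt = Fintype.card ιT) (hns0 : 0 < ns) (hnt0 : 0 < nt)
    (α lam : ℝ) (w : ι1 ⊕ ι0 → ℝ) :
    let u1 : H := (1 / (ns : ℝ)) • ∑ i, w (Sum.inl i) • φ1 i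
    let u0 : H := (1 / (ns : ℝ)) • ∑ i, w (Sum.inr i) • φ0 i
    let t : H := (1 / (nt : ℝ)) • ∑ j, φT j
    let M : Matrix (ι1 ⊕ ι0) (ι1 ⊕ ι0) ℝ :=
      (1 / (ns : ℝ) ^ 2) • Matrix.fromBlocks
        (Matrix.of fun i j => (inner ℝ (φ1 i) (φ1 j) : ℝ) + lam * (if i = j then 1 else 0))
        (Matrix.of fun i j => (α - 1) * (inner ℝ (φ1 i) (φ0 j) : ℝ))
        (Matrix.of fun i j => (α - 1) * (inner ℝ (φ0 i) (φ1 j) : ℝ))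
        (Matrix.of fun i j => (inner ℝ (φ0 i) (φ0 j) : ℝ) + lam * (if i = j then 1 else 0))
    let b : ι1 ⊕ ι0 → ℝ :=
      Sum.elim
        (fun i => (α / ((ns : ℝ) * (nt : ℝ))) * ∑ j, (inner ℝ (φ1 i) (φT j) : ℝ))
        (fun i => (α / ((ns : ℝ) * (nt : ℝ))) * ∑ j, (inner ℝ (φ0 i) (φT j) : ℝ))
    let c : ℝ := (2 * α / (nt : ℝ) ^ 2) * ∑ i, ∑ j, (inner ℝ (φT i) (φT j) : ℝ)
    α * ‖u1 - t‖ ^ 2 + α * ‖u0 - t‖ ^ 2 + (1 - α) * ‖u1 - u0‖ ^ 2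
        + (lam / (ns : ℝ) ^ 2) * ∑ i, w i ^ 2
      = dotProduct w (M.mulVec w) - 2 * dotProduct b w + c := by
  intro u1 u0 t M b c
  have hN : (ns : ℝ) ≠ 0 := Nat.cast_ne_zero.mpr hns0.ne'
  have hT : (nt : ℝ) ≠ 0 := Nat.cast_ne_zero.mpr hnt0.ne'
  set a1 : H := ∑ i, w (Sum.inl i) • φ1 i with ha1
  set a0 : H := ∑ i, w (Sum.inr i) • φ0 i with ha0
  set s : H := ∑ j, φT j with hs
  set A : ℝ := inner ℝ a1 a1 with hA
  set B : ℝ := inner ℝ a0 a0 with hB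
  set C : ℝ := inner ℝ a1 a0 with hC
  set D : ℝ := inner ℝ a1 s with hD
  set E : ℝ := inner ℝ a0 s with hE
  set F : ℝ := inner ℝ s s with hF
  -- entrywise expansions
  have e1 : ∀ i : ι1, (∑ j : ι1, (inner ℝ (φ1 i) (φ1 j) : ℝ) * w (Sum.inl j))
      = inner ℝ (φ1 i) a1 := fun i => by
    rw [ha1, inner_sum]
    exact Finset.sum_congr rfl fun j _ => by rw [real_inner_smul_right]; ring
  have e2 : ∀ i : ι1, (∑ j : ι0, (inner ℝ (φ1 i) (φ0 j) : ℝ) * w (Sum.inr j))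
      = inner ℝ (φ1 i) a0 := fun i => by
    rw [ha0, inner_sum]
    exact Finset.sum_congr rfl fun j _ => by rw [real_inner_smul_right]; ring
  have e3 : ∀ i : ι0, (∑ j : ι1, (inner ℝ (φ0 i) (φ1 j) : ℝ) * w (Sum.inl j))
      = inner ℝ (φ0 i) a1 := fun i => by
    rw [ha1, inner_sum]
    exact Finset.sum_congr rfl fun j _ => by rw [real_inner_smul_right]; ring
  have e4 : ∀ i : ι0, (∑ j : ι0, (inner ℝ (φ0 i) (φ0 j) : ℝ) * w (Sum.inr j))
      = inner ℝ (φ0 i) a0 := fun i => by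
    rw [ha0, inner_sum]
    exact Finset.sum_congr rfl fun j _ => by rw [real_inner_smul_right]; ring
  have e5 : ∀ i : ι1, (∑ j : ιT, (inner ℝ (φ1 i) (φT j) : ℝ)) = inner ℝ (φ1 i) s :=
    fun i => by rw [hs, inner_sum]
  have e6 : ∀ i : ι0, (∑ j : ιT, (inner ℝ (φ0 i) (φT j) : ℝ)) = inner ℝ (φ0 i) s :=
    fun i => by rw [hs, inner_sum]
  -- aggregate expansions
  have g1 : ∑ i : ι1, w (Sum.inl i) * (inner ℝ (φ1 i) a1 : ℝ) = A := by
    rw [hA]; nth_rewrite 2 [ha1]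
    rw [sum_inner]
    exact Finset.sum_congr rfl fun i _ => by rw [real_inner_smul_left]
  have g2 : ∑ i : ι1, w (Sum.inl i) * (inner ℝ (φ1 i) a0 : ℝ) = C := by
    rw [hC, ha1, sum_inner]
    exact Finset.sum_congr rfl fun i _ => by rw [real_inner_smul_left]
  have g3 : ∑ i : ι0, w (Sum.inr i) * (inner ℝ (φ0 i) a1 : ℝ) = C := by
    rw [hC, real_inner_comm, ha0, sum_inner]
    exact Finset.sum_congr rfl fun i _ => by rw [real_inner_smul_left]
  have g4 : ∑ i : ι0, w (Sum.inr i) * (inner ℝ (φ0 i) a0 : ℝ) = B := by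
    rw [hB]; nth_rewrite 2 [ha0]
    rw [sum_inner]
    exact Finset.sum_congr rfl fun i _ => by rw [real_inner_smul_left]
  have g5 : ∑ i : ι1, w (Sum.inl i) * (inner ℝ (φ1 i) s : ℝ) = D := by
    rw [hD, ha1, sum_inner]
    exact Finset.sum_congr rfl fun i _ => by rw [real_inner_smul_left]
  have g6 : ∑ i : ι0, w (Sum.inr i) * (inner ℝ (φ0 i) s : ℝ) = E := by
    rw [hE, ha0, sum_inner]
    exact Finset.sum_congr rfl fun i _ => by rw [real_inner_smul_left]
  have g7 : ∑ i : ιT, ∑ j : ιT, (inner ℝ (φT i) (φT j) : ℝ) = F := by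
    rw [hF, hs, sum_inner]
    exact Finset.sum_congr rfl fun i _ => by rw [inner_sum]
  -- mulVec entries
  have hv1 : ∀ i : ι1, M.mulVec w (Sum.inl i) = (1 / (ns : ℝ) ^ 2) *
      ((inner ℝ (φ1 i) a1 : ℝ) + lam * w (Sum.inl i) + (α - 1) * (inner ℝ (φ1 i) a0 : ℝ)) := by
    intro i
    have l1 : ∑ j : ι1, (1 / (ns : ℝ) ^ 2 * ((inner ℝ (φ1 i) (φ1 j) : ℝ)
          + lam * (if i = j then 1 else 0))) * w (Sum.inl j)
        = (1 / (ns : ℝ) ^ 2) * ((∑ j : ι1, (inner ℝ (φ1 i) (φ1 j) : ℝ) * w (Sum.inl j))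
            + lam * w (Sum.inl i)) := by
      calc ∑ j : ι1, (1 / (ns : ℝ) ^ 2 * ((inner ℝ (φ1 i) (φ1 j) : ℝ)
              + lam * (if i = j then 1 else 0))) * w (Sum.inl j)
          = ∑ j : ι1, ((1 / (ns : ℝ) ^ 2) * ((inner ℝ (φ1 i) (φ1 j) : ℝ) * w (Sum.inl j))
              + (if i = j then (1 / (ns : ℝ) ^ 2) * (lam * w (Sum.inl j)) else 0)) :=
            Finset.sum_congr rfl fun j _ => by by_cases h : i = j <;> simp [h] <;> ring
        _ = (∑ j : ι1, (1 / (ns : ℝ) ^ 2) * ((inner ℝ (φ1 i) (φ1 j) : ℝ) * w (Sum.inl j)))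
              + ∑ j : ι1, (if i = j then (1 / (ns : ℝ) ^ 2) * (lam * w (Sum.inl j)) else 0) :=
            Finset.sum_add_distrib
        _ = _ := by
            rw [← Finset.mul_sum, Finset.sum_ite_eq, if_pos (Finset.mem_univ i)]; ring
    have l2 : ∑ j : ι0, (1 / (ns : ℝ) ^ 2 * ((α - 1) * (inner ℝ (φ1 i) (φ0 j) : ℝ))) * w (Sum.inr j)
        = (1 / (ns : ℝ) ^ 2) * ((α - 1) * ∑ j : ι0, (inner ℝ (φ1 i) (φ0 j) : ℝ) * w (Sum.inr j)) := by
      rw [Finset.mul_sum, Finset.mul_sum]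
      exact Finset.sum_congr rfl fun j _ => by ring
    simp only [M, Matrix.mulVec, dotProduct, Fintype.sum_sum_type, Matrix.smul_apply,
      smul_eq_mul, Matrix.fromBlocks_apply₁₁, Matrix.fromBlocks_apply₁₂, Matrix.of_apply]
    rw [l1, l2, e1, e2]; ring
  have hv2 : ∀ i : ι0, M.mulVec w (Sum.inr i) = (1 / (ns : ℝ) ^ 2) *
      ((inner ℝ (φ0 i) a0 : ℝ) + lam * w (Sum.inr i) + (α - 1) * (inner ℝ (φ0 i) a1 : ℝ)) := by
    intro i
    have l1 : ∑ j : ι0, (1 / (ns : ℝ) ^ 2 * ((inner ℝ (φ0 i) (φ0 j) : ℝ)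
          + lam * (if i = j then 1 else 0))) * w (Sum.inr j)
        = (1 / (ns : ℝ) ^ 2) * ((∑ j : ι0, (inner ℝ (φ0 i) (φ0 j) : ℝ) * w (Sum.inr j))
            + lam * w (Sum.inr i)) := by
      calc ∑ j : ι0, (1 / (ns : ℝ) ^ 2 * ((inner ℝ (φ0 i) (φ0 j) : ℝ)
              + lam * (if i = j then 1 else 0))) * w (Sum.inr j)
          = ∑ j : ι0, ((1 / (ns : ℝ) ^ 2) * ((inner ℝ (φ0 i) (φ0 j) : ℝ) * w (Sum.inr j))
              + (if i = j then (1 / (ns : ℝ) ^ 2) * (lam * w (Sum.inr j)) else 0)) :=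
            Finset.sum_congr rfl fun j _ => by by_cases h : i = j <;> simp [h] <;> ring
        _ = (∑ j : ι0, (1 / (ns : ℝ) ^ 2) * ((inner ℝ (φ0 i) (φ0 j) : ℝ) * w (Sum.inr j)))
              + ∑ j : ι0, (if i = j then (1 / (ns : ℝ) ^ 2) * (lam * w (Sum.inr j)) else 0) :=
            Finset.sum_add_distrib
        _ = _ := by
            rw [← Finset.mul_sum, Finset.sum_ite_eq, if_pos (Finset.mem_univ i)]; ring
    have l2 : ∑ j : ι1, (1 / (ns : ℝ) ^ 2 * ((α - 1) * (inner ℝ (φ0 i) (φ1 j) : ℝ))) * w (Sum.inl j)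
        = (1 / (ns : ℝ) ^ 2) * ((α - 1) * ∑ j : ι1, (inner ℝ (φ0 i) (φ1 j) : ℝ) * w (Sum.inl j)) := by
      rw [Finset.mul_sum, Finset.mul_sum]
      exact Finset.sum_congr rfl fun j _ => by ring
    simp only [M, Matrix.mulVec, dotProduct, Fintype.sum_sum_type, Matrix.smul_apply,
      smul_eq_mul, Matrix.fromBlocks_apply₂₁, Matrix.fromBlocks_apply₂₂, Matrix.of_apply]
    rw [l1, l2, e4, e3]; ring
  -- quadratic form
  have hMw : dotProduct w (M.mulVec w) = (1 / (ns : ℝ) ^ 2) *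
      (A + B + 2 * (α - 1) * C + lam * ∑ i, w i ^ 2) := by
    have hsplit : dotProduct w (M.mulVec w)
        = ∑ i : ι1, w (Sum.inl i) * M.mulVec w (Sum.inl i)
          + ∑ i : ι0, w (Sum.inr i) * M.mulVec w (Sum.inr i) := by
      simp [dotProduct, Fintype.sum_sum_type]
    have p1 : ∑ i : ι1, w (Sum.inl i) * M.mulVec w (Sum.inl i)
        = (1 / (ns : ℝ) ^ 2) * ((∑ i : ι1, w (Sum.inl i) * (inner ℝ (φ1 i) a1 : ℝ))
            + lam * (∑ i : ι1, w (Sum.inl i) ^ 2)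
            + (α - 1) * ∑ i : ι1, w (Sum.inl i) * (inner ℝ (φ1 i) a0 : ℝ)) := by
      calc ∑ i : ι1, w (Sum.inl i) * M.mulVec w (Sum.inl i)
          = ∑ i : ι1, ((1 / (ns : ℝ) ^ 2) * (w (Sum.inl i) * (inner ℝ (φ1 i) a1 : ℝ))
              + (1 / (ns : ℝ) ^ 2 * lam) * (w (Sum.inl i) ^ 2)
              + (1 / (ns : ℝ) ^ 2 * (α - 1)) * (w (Sum.inl i) * (inner ℝ (φ1 i) a0 : ℝ))) :=
            Finset.sum_congr rfl fun i _ => by rw [hv1 i]; ring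
        _ = _ := by
            rw [Finset.sum_add_distrib, Finset.sum_add_distrib, ← Finset.mul_sum,
              ← Finset.mul_sum, ← Finset.mul_sum]; ring
    have p2 : ∑ i : ι0, w (Sum.inr i) * M.mulVec w (Sum.inr i)
        = (1 / (ns : ℝ) ^ 2) * ((∑ i : ι0, w (Sum.inr i) * (inner ℝ (φ0 i) a0 : ℝ))
            + lam * (∑ i : ι0, w (Sum.inr i) ^ 2)
            + (α - 1) * ∑ i : ι0, w (Sum.inr i) * (inner ℝ (φ0 i) a1 : ℝ)) := by
      calc ∑ i : ι0, w (Sum.inr i) * M.mulVec w (Sum.inr i)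
          = ∑ i : ι0, ((1 / (ns : ℝ) ^ 2) * (w (Sum.inr i) * (inner ℝ (φ0 i) a0 : ℝ))
              + (1 / (ns : ℝ) ^ 2 * lam) * (w (Sum.inr i) ^ 2)
              + (1 / (ns : ℝ) ^ 2 * (α - 1)) * (w (Sum.inr i) * (inner ℝ (φ0 i) a1 : ℝ))) :=
            Finset.sum_congr rfl fun i _ => by rw [hv2 i]; ring
        _ = _ := by
            rw [Finset.sum_add_distrib, Finset.sum_add_distrib, ← Finset.mul_sum,
              ← Finset.mul_sum, ← Finset.mul_sum]; ring
    rw [hsplit, p1, p2, g1, g2, g3, g4,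
      show (∑ i, w i ^ 2) = (∑ i : ι1, w (Sum.inl i) ^ 2) + ∑ i : ι0, w (Sum.inr i) ^ 2
        from Fintype.sum_sum_type _]
    ring
  have hbw : dotProduct b w = (α / ((ns : ℝ) * (nt : ℝ))) * (D + E) := by
    have hsplit : dotProduct b w
        = ∑ i : ι1, b (Sum.inl i) * w (Sum.inl i)
          + ∑ i : ι0, b (Sum.inr i) * w (Sum.inr i) := by
      simp [dotProduct, Fintype.sum_sum_type]
    have p1 : ∑ i : ι1, b (Sum.inl i) * w (Sum.inl i)
        = (α / ((ns : ℝ) * (nt : ℝ))) * ∑ i : ι1, w (Sum.inl i) * (inner ℝ (φ1 i) s : ℝ) := by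
      rw [Finset.mul_sum]
      exact Finset.sum_congr rfl fun i _ => by
        simp only [b, Sum.elim_inl]; rw [e5 i]; ring
    have p2 : ∑ i : ι0, b (Sum.inr i) * w (Sum.inr i)
        = (α / ((ns : ℝ) * (nt : ℝ))) * ∑ i : ι0, w (Sum.inr i) * (inner ℝ (φ0 i) s : ℝ) := by
      rw [Finset.mul_sum]
      exact Finset.sum_congr rfl fun i _ => by
        simp only [b, Sum.elim_inr]; rw [e6 i]; ring
    rw [hsplit, p1, p2, g5, g6]; ring
  have hc : c = (2 * α / (nt : ℝ) ^ 2) * F := by rw [← g7]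
  -- LHS pieces
  have h1 : α * ‖u1 - t‖ ^ 2 = α * ((1/(ns:ℝ))^2 * A - 2 * ((1/(ns:ℝ)) * (1/(nt:ℝ)) * D)
      + (1/(nt:ℝ))^2 * F) := by
    rw [@norm_sub_sq_real, ← real_inner_self_eq_norm_sq, ← real_inner_self_eq_norm_sq]
    simp only [u1, t, real_inner_smul_left, real_inner_smul_right, hA, hD, hF]
    ring
  have h2 : α * ‖u0 - t‖ ^ 2 = α * ((1/(ns:ℝ))^2 * B - 2 * ((1/(ns:ℝ)) * (1/(nt:ℝ)) * E)
      + (1/(nt:ℝ))^2 * F) := by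
    rw [@norm_sub_sq_real, ← real_inner_self_eq_norm_sq, ← real_inner_self_eq_norm_sq]
    simp only [u0, t, real_inner_smul_left, real_inner_smul_right, hB, hE, hF]
    ring
  have h3 : (1 - α) * ‖u1 - u0‖ ^ 2 = (1 - α) * ((1/(ns:ℝ))^2 * A
      - 2 * ((1/(ns:ℝ))^2 * C) + (1/(ns:ℝ))^2 * B) := by
    rw [@norm_sub_sq_real, ← real_inner_self_eq_norm_sq, ← real_inner_self_eq_norm_sq]
    simp only [u1, u0, real_inner_smul_left, real_inner_smul_right, hA, hB, hC]
    ring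
  rw [hMw, hbw, hc, h1, h2, h3]
  field_simp
  ring
end

section
/- Let (Ω, 𝔽, μ) be a probability space, X : Ω → ℝ^p, S : Ω → {0,1}, A : Ω → {0,1} measurable. Suppose there exist measurable ρ, π : ℝ^p → ℝ and a constant c > 0 such that ρ∘X is a version of E_μ[S | σ(X)], (π∘X)·(ρ∘X) is a version of E_μ[S·A | σ(X)], and ρ∘X ≥ c and π∘X ≥ c μ-a.e. Then for every bounded measurable h : ℝ^p → ℝ: E_μ[ S · A · (1/(π∘X)) · ((1 − ρ∘X)/(ρ∘X)) · h(X) ] = E_μ[ (1 − S) · h(X) ]. That is, the importance weights exactly reweight the covariate distribution of the treated units in the source population to the covariate distribution of the target population. -/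
open MeasureTheory ProbabilityTheory

private lemma integral_mul_eq_integral_mul_condexp {α : Type*} {m m0 : MeasurableSpace α}
    (hm : m ≤ m0) (μ : @Measure α m0) [IsProbabilityMeasure μ] {k f : α → ℝ}
    (hk : StronglyMeasurable[m] k) (hf : Integrable f μ)
    (C : ℝ) (hkb : ∀ᵐ x ∂μ, ‖k x‖ ≤ C) :
    ∫ x, k x * f x ∂μ = ∫ x, k x * (μ[f|m]) x ∂μ := by
  have h1 := condExp_stronglyMeasurable_mul_of_bound hm hk hf C hkb
  calc ∫ x, k x * f x ∂μ = ∫ x, (μ[k * f|m]) x ∂μ := (integral_condExp hm).symm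
    _ = ∫ x, k x * (μ[f|m]) x ∂μ := integral_congr_ae h1

/-- **Importance weights reweight the treated source units to the target population.**
With `ρ(X)` a version of `E[S | X]`, `π(X)ρ(X)` a version of `E[S·A | X]`, and both `ρ∘X`
and `π∘X` bounded below by `c > 0` a.e., for every bounded measurable `h`:
`E[S·A·(1/π(X))·((1−ρ(X))/ρ(X))·h(X)] = E[(1−S)·h(X)]`. -/
theorem importance_weights_reweight_to_target
    {Ω : Type*} [MeasurableSpace Ω] (μ : Measure Ω) [IsProbabilityMeasure μ] {p : ℕ}
    (X : Ω → (Fin p → ℝ)) (S A : Ω → ℝ)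
    (hX : Measurable X) (hS : Measurable S) (hA : Measurable A)
    (hSbin : ∀ ω, S ω = 0 ∨ S ω = 1) (hAbin : ∀ ω, A ω = 0 ∨ A ω = 1)
    (ρ π : (Fin p → ℝ) → ℝ) (hρm : Measurable ρ) (hπm : Measurable π)
    (c : ℝ) (hc : 0 < c)
    (hρver : (fun ω => ρ (X ω)) =ᵐ[μ] μ[S | MeasurableSpace.comap X inferInstance])
    (hπρver : (fun ω => π (X ω) * ρ (X ω))
        =ᵐ[μ] μ[fun ω => S ω * A ω | MeasurableSpace.comap X inferInstance])
    (hρpos : ∀ᵐ ω ∂μ, c ≤ ρ (X ω)) (hπpos : ∀ᵐ ω ∂μ, c ≤ π (X ω)) :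
    ∀ h : (Fin p → ℝ) → ℝ, Measurable h → (∃ C, ∀ x, |h x| ≤ C) →
      ∫ ω, S ω * A ω * (1 / π (X ω)) * ((1 - ρ (X ω)) / ρ (X ω)) * h (X ω) ∂μ
        = ∫ ω, (1 - S ω) * h (X ω) ∂μ := by
  rintro h hhm ⟨C, hC⟩
  have hm : MeasurableSpace.comap X inferInstance ≤ ‹MeasurableSpace Ω› := by
    rintro t ⟨s, hs, rfl⟩; exact hX hs
  have hXm : Measurable[MeasurableSpace.comap X inferInstance] X := fun s hs => ⟨s, hs, rfl⟩
  set m : MeasurableSpace Ω := MeasurableSpace.comap X inferInstance with hm_def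
  have hC0 : 0 ≤ C := le_trans (abs_nonneg _) (hC (fun _ => 0))
  have hS01 : ∀ ω, 0 ≤ S ω ∧ S ω ≤ 1 := fun ω => by
    rcases hSbin ω with h' | h' <;> simp [h']
  have hA01 : ∀ ω, 0 ≤ A ω ∧ A ω ≤ 1 := fun ω => by
    rcases hAbin ω with h' | h' <;> simp [h']
  have hSint : Integrable S μ :=
    (integrable_const (1:ℝ)).mono' hS.aestronglyMeasurable
      (Filter.Eventually.of_forall fun ω => by
        rw [Real.norm_eq_abs, abs_le]; exact ⟨by linarith [(hS01 ω).1], (hS01 ω).2⟩)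
  have hSAint : Integrable (fun ω => S ω * A ω) μ :=
    (integrable_const (1:ℝ)).mono' (hS.mul hA).aestronglyMeasurable
      (Filter.Eventually.of_forall fun ω => by
        rw [Real.norm_eq_abs, abs_le]
        constructor
        · nlinarith [(hS01 ω).1, (hA01 ω).1]
        · nlinarith [(hS01 ω).1, (hS01 ω).2, (hA01 ω).1, (hA01 ω).2])
  -- a.e. upper bound for ρ ∘ X
  have hρle1 : ∀ᵐ ω ∂μ, ρ (X ω) ≤ 1 := by
    have hmono : μ[S|m] ≤ᵐ[μ] μ[fun _ => (1:ℝ)|m] :=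
      condExp_mono hSint (integrable_const 1)
        (Filter.Eventually.of_forall fun ω => (hS01 ω).2)
    have hconst : μ[fun _ : Ω => (1:ℝ)|m] = fun _ => (1:ℝ) := condExp_const (μ := μ) hm (1:ℝ)
    filter_upwards [hρver, hmono] with ω h1 h2
    rw [h1]
    simpa [hconst] using h2
  -- the weight function
  set k : Ω → ℝ := fun ω => (1 / π (X ω)) * ((1 - ρ (X ω)) / ρ (X ω)) * h (X ω) with hk_def
  have hkm : StronglyMeasurable[m] k := by
    have : Measurable[m] k :=
      ((((measurable_const.div hπm).mul
        ((measurable_const.sub hρm).div hρm)).mul hhm).comp hXm)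
    exact this.stronglyMeasurable
  have hkb : ∀ᵐ ω ∂μ, ‖k ω‖ ≤ (1 / c) * (1 / c) * C := by
    filter_upwards [hρpos, hπpos, hρle1] with ω h1 h2 h3
    have hρ0 : 0 < ρ (X ω) := lt_of_lt_of_le hc h1
    have hπ0 : 0 < π (X ω) := lt_of_lt_of_le hc h2
    rw [Real.norm_eq_abs, hk_def]
    have e1 : |1 / π (X ω)| ≤ 1 / c := by
      rw [abs_of_pos (by positivity)]
      exact one_div_le_one_div_of_le hc h2
    have e2 : |(1 - ρ (X ω)) / ρ (X ω)| ≤ 1 / c := by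
      rw [abs_div, abs_of_pos hρ0, div_le_div_iff₀ hρ0 hc]
      have : |1 - ρ (X ω)| ≤ 1 := by rw [abs_le]; constructor <;> linarith
      nlinarith [abs_nonneg (1 - ρ (X ω))]
    calc |1 / π (X ω) * ((1 - ρ (X ω)) / ρ (X ω)) * h (X ω)|
        = |1 / π (X ω)| * |(1 - ρ (X ω)) / ρ (X ω)| * |h (X ω)| := by
          rw [abs_mul, abs_mul]
      _ ≤ (1 / c) * (1 / c) * C := by
          have := hC (X ω)
          gcongr <;> positivity
  -- LHS
  have lhs_eq :
      ∫ ω, S ω * A ω * (1 / π (X ω)) * ((1 - ρ (X ω)) / ρ (X ω)) * h (X ω) ∂μ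
        = ∫ ω, (1 - ρ (X ω)) * h (X ω) ∂μ := by
    have step1 : ∫ ω, S ω * A ω * (1 / π (X ω)) * ((1 - ρ (X ω)) / ρ (X ω)) * h (X ω) ∂μ
        = ∫ ω, k ω * (S ω * A ω) ∂μ := by
      apply integral_congr_ae; filter_upwards with ω; rw [hk_def]; ring
    rw [step1,
      integral_mul_eq_integral_mul_condexp hm μ hkm hSAint ((1/c) * (1/c) * C) hkb]
    apply integral_congr_ae
    filter_upwards [hπρver, hρpos, hπpos] with ω h1 h2 h3
    rw [← h1, hk_def]
    have hρ0 : ρ (X ω) ≠ 0 := ne_of_gt (lt_of_lt_of_le hc h2)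
    have hπ0 : π (X ω) ≠ 0 := ne_of_gt (lt_of_lt_of_le hc h3)
    field_simp
  -- RHS
  have h1Sint : Integrable (fun ω => 1 - S ω) μ := (integrable_const 1).sub hSint
  have hhXm : StronglyMeasurable[m] (fun ω => h (X ω)) :=
    (hhm.comp hXm).stronglyMeasurable
  have hhXb : ∀ᵐ ω ∂μ, ‖(fun ω => h (X ω)) ω‖ ≤ C :=
    Filter.Eventually.of_forall fun ω => by rw [Real.norm_eq_abs]; exact hC (X ω)
  have rhs_eq : ∫ ω, (1 - S ω) * h (X ω) ∂μ = ∫ ω, (1 - ρ (X ω)) * h (X ω) ∂μ := by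
    have step1 : ∫ ω, (1 - S ω) * h (X ω) ∂μ = ∫ ω, h (X ω) * (1 - S ω) ∂μ := by
      apply integral_congr_ae; filter_upwards with ω; ring
    rw [step1,
      integral_mul_eq_integral_mul_condexp hm μ hhXm h1Sint C hhXb]
    have hsub : μ[fun ω => 1 - S ω|m] =ᵐ[μ] fun ω => 1 - ρ (X ω) := by
      have h1 : μ[(fun _ : Ω => (1:ℝ)) - S|m] =ᵐ[μ] μ[fun _ : Ω => (1:ℝ)|m] - μ[S|m] :=
        condExp_sub (integrable_const 1) hSint m
      have hconst : μ[fun _ : Ω => (1:ℝ)|m] = fun _ => (1:ℝ) := condExp_const (μ := μ) hm (1:ℝ)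
      have h2 : (fun ω => 1 - S ω) = (fun _ : Ω => (1:ℝ)) - S := rfl
      rw [h2]
      filter_upwards [h1, hρver] with ω e1 e2
      rw [e1]
      simp [hconst, ← e2]
    apply integral_congr_ae
    filter_upwards [hsub] with ω e1
    rw [e1]; ring
  rw [lhs_eq, rhs_eq]
end

section
/- Let (Ω, 𝔽, ν) be a probability space, X : Ω → ℝ^p and A : Ω → {0,1} measurable, and suppose there exists measurable π : ℝ^p → ℝ such that π∘X is a version of the conditional expectation E_ν[A | σ(X)] and 0 ≤ π∘X ≤ 1 ν-a.e. Then for every bounded measurable h : ℝ^p → ℝ: E_ν[ A · (1 − π(X)) · h(X) ] = E_ν[ (1 − A) · π(X) · h(X) ] = E_ν[ π(X)·(1 − π(X)) · h(X) ]. That is, the overlap weights achieve exact population-level balance: the overlap-weighted covariate distribution of the treated group coincides with the overlap-weighted covariate distribution of the control group, and both equal the distribution retargeted by the density ratio proportional to π(x)(1 − π(x)). -/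
open MeasureTheory ProbabilityTheory

lemma overlap_key
    {Ω : Type*} [MeasurableSpace Ω] (ν : Measure Ω) [IsProbabilityMeasure ν] {p : ℕ}
    (X : Ω → (Fin p → ℝ)) (A : Ω → ℝ)
    (hX : Measurable X) (hA : Measurable A) (hAbin : ∀ ω, A ω = 0 ∨ A ω = 1)
    (π : (Fin p → ℝ) → ℝ)
    (hπver : (fun ω => π (X ω)) =ᵐ[ν] ν[A | MeasurableSpace.comap X inferInstance])
    (f : (Fin p → ℝ) → ℝ) (hf : Measurable f) (C : ℝ)
    (hC : ∀ᵐ ω ∂ν, |f (X ω)| ≤ C) :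
    ∫ ω, A ω * f (X ω) ∂ν = ∫ ω, π (X ω) * f (X ω) ∂ν := by
  have hm : MeasurableSpace.comap X inferInstance ≤ _ := hX.comap_le
  set m := MeasurableSpace.comap X inferInstance with hm_def
  have hfX : StronglyMeasurable[m] fun ω => f (X ω) :=
    (hf.comp (Measurable.of_comap_le le_rfl)).stronglyMeasurable
  have hAb : ∀ ω, |A ω| ≤ 1 := by
    intro ω; rcases hAbin ω with h | h <;> simp [h]
  have hiA : Integrable A ν :=
    ⟨hA.aestronglyMeasurable,
      HasFiniteIntegral.of_bounded (C := 1) (Filter.Eventually.of_forall fun ω => by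
        simpa using hAb ω)⟩
  have hifA : Integrable ((fun ω => f (X ω)) * A) ν := by
    refine ⟨((hf.comp hX).mul hA).aestronglyMeasurable,
      HasFiniteIntegral.of_bounded (C := C) ?_⟩
    filter_upwards [hC] with ω hω
    calc ‖f (X ω) * A ω‖ = |f (X ω)| * |A ω| := abs_mul _ _
    _ ≤ C * 1 := by
        exact mul_le_mul hω (hAb ω) (abs_nonneg _) ((abs_nonneg _).trans hω)
    _ = C := mul_one C
  have hpull := condExp_mul_of_stronglyMeasurable_left hfX hifA hiA
  calc ∫ ω, A ω * f (X ω) ∂ν = ∫ ω, ((fun ω => f (X ω)) * A) ω ∂ν := by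
        simp [mul_comm]
    _ = ∫ ω, (ν[(fun ω => f (X ω)) * A | m]) ω ∂ν := (integral_condExp hm).symm
    _ = ∫ ω, f (X ω) * (ν[A | m]) ω ∂ν := integral_congr_ae hpull
    _ = ∫ ω, π (X ω) * f (X ω) ∂ν := by
        refine integral_congr_ae ?_
        filter_upwards [hπver] with ω hω
        rw [← hω, mul_comm]

/-- **Exact population-level balance of the overlap weights.** With `π(X)` a version of
`E[A | X]` and `0 ≤ π(X) ≤ 1` a.e., for every bounded measurable `h`:
`E[A(1−π(X))h(X)] = E[(1−A)π(X)h(X)] = E[π(X)(1−π(X))h(X)]`. -/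
theorem overlap_weights_exact_balance
    {Ω : Type*} [MeasurableSpace Ω] (ν : Measure Ω) [IsProbabilityMeasure ν] {p : ℕ}
    (X : Ω → (Fin p → ℝ)) (A : Ω → ℝ)
    (hX : Measurable X) (hA : Measurable A) (hAbin : ∀ ω, A ω = 0 ∨ A ω = 1)
    (π : (Fin p → ℝ) → ℝ) (hπm : Measurable π)
    (hπver : (fun ω => π (X ω)) =ᵐ[ν] ν[A | MeasurableSpace.comap X inferInstance])
    (hπ01 : ∀ᵐ ω ∂ν, 0 ≤ π (X ω) ∧ π (X ω) ≤ 1) :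
    ∀ h : (Fin p → ℝ) → ℝ, Measurable h → (∃ C, ∀ x, |h x| ≤ C) →
      (∫ ω, A ω * (1 - π (X ω)) * h (X ω) ∂ν
          = ∫ ω, (1 - A ω) * π (X ω) * h (X ω) ∂ν)
      ∧ ∫ ω, A ω * (1 - π (X ω)) * h (X ω) ∂ν
          = ∫ ω, π (X ω) * (1 - π (X ω)) * h (X ω) ∂ν := by
  rintro h hh ⟨C, hC⟩
  have hC0 : 0 ≤ C := (abs_nonneg _).trans (hC 0)
  have hπb : ∀ᵐ ω ∂ν, |π (X ω)| ≤ 1 := by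
    filter_upwards [hπ01] with ω ⟨h0, h1⟩; rw [abs_le]; constructor <;> linarith
  -- key identity with f = (1-π)·h
  have e1 : ∫ ω, A ω * ((1 - π (X ω)) * h (X ω)) ∂ν
      = ∫ ω, π (X ω) * ((1 - π (X ω)) * h (X ω)) ∂ν := by
    refine overlap_key ν X A hX hA hAbin π hπver (fun x => (1 - π x) * h x)
      (((measurable_const.sub hπm)).mul hh) (2 * C) ?_
    filter_upwards [hπb] with ω hω
    calc |(1 - π (X ω)) * h (X ω)| = |1 - π (X ω)| * |h (X ω)| := abs_mul _ _
    _ ≤ 2 * C := by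
        refine mul_le_mul ?_ (hC _) (abs_nonneg _) (by norm_num)
        calc |1 - π (X ω)| ≤ |(1 : ℝ)| + |π (X ω)| := abs_sub _ _
        _ ≤ 2 := by simp only [abs_one]; linarith
  -- key identity with f = π·h
  have e2 : ∫ ω, A ω * (π (X ω) * h (X ω)) ∂ν
      = ∫ ω, π (X ω) * (π (X ω) * h (X ω)) ∂ν := by
    refine overlap_key ν X A hX hA hAbin π hπver (fun x => π x * h x)
      (hπm.mul hh) C ?_
    filter_upwards [hπb] with ω hω
    calc |π (X ω) * h (X ω)| = |π (X ω)| * |h (X ω)| := abs_mul _ _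
    _ ≤ 1 * C := mul_le_mul hω (hC _) (abs_nonneg _) zero_le_one
    _ = C := one_mul C
  -- integrability helpers
  have integ : ∀ (g : Ω → ℝ), Measurable g → ∀ D : ℝ, (∀ᵐ ω ∂ν, |g ω| ≤ D) →
      Integrable g ν := fun g hg D hD =>
    ⟨hg.aestronglyMeasurable, HasFiniteIntegral.of_bounded (C := D) hD⟩
  have hAb : ∀ ω, |A ω| ≤ 1 := by
    intro ω; rcases hAbin ω with h' | h' <;> simp [h']
  have i1 : Integrable (fun ω => π (X ω) * h (X ω)) ν := by
    refine integ _ ((hπm.comp hX).mul (hh.comp hX)) C ?_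
    filter_upwards [hπb] with ω hω
    calc |π (X ω) * h (X ω)| = |π (X ω)| * |h (X ω)| := abs_mul _ _
    _ ≤ 1 * C := mul_le_mul hω (hC _) (abs_nonneg _) zero_le_one
    _ = C := one_mul C
  have i2 : Integrable (fun ω => A ω * (π (X ω) * h (X ω))) ν := by
    refine integ _ (hA.mul ((hπm.comp hX).mul (hh.comp hX))) C ?_
    filter_upwards [hπb] with ω hω
    calc |A ω * (π (X ω) * h (X ω))| = |A ω| * (|π (X ω)| * |h (X ω)|) := by
          rw [abs_mul, abs_mul]
    _ ≤ 1 * (1 * C) := by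
        refine mul_le_mul (hAb ω) (mul_le_mul hω (hC _) (abs_nonneg _) zero_le_one) ?_ zero_le_one
        positivity
    _ = C := by ring
  have eq3 : ∫ ω, (1 - A ω) * π (X ω) * h (X ω) ∂ν
      = ∫ ω, π (X ω) * (1 - π (X ω)) * h (X ω) ∂ν := by
    have split1 : ∫ ω, (1 - A ω) * π (X ω) * h (X ω) ∂ν
        = ∫ ω, π (X ω) * h (X ω) ∂ν - ∫ ω, A ω * (π (X ω) * h (X ω)) ∂ν := by
      rw [← integral_sub i1 i2]
      exact integral_congr_ae (Filter.Eventually.of_forall fun ω => by ring)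
    have i3 : Integrable (fun ω => π (X ω) * (π (X ω) * h (X ω))) ν := by
      refine integ _ ((hπm.comp hX).mul ((hπm.comp hX).mul (hh.comp hX))) C ?_
      filter_upwards [hπb] with ω hω
      calc |π (X ω) * (π (X ω) * h (X ω))| = |π (X ω)| * (|π (X ω)| * |h (X ω)|) := by
            rw [abs_mul, abs_mul]
      _ ≤ 1 * (1 * C) := by
          refine mul_le_mul hω (mul_le_mul hω (hC _) (abs_nonneg _) zero_le_one) ?_ zero_le_one
          positivity
      _ = C := by ring
    have split2 : ∫ ω, π (X ω) * (1 - π (X ω)) * h (X ω) ∂ν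
        = ∫ ω, π (X ω) * h (X ω) ∂ν - ∫ ω, π (X ω) * (π (X ω) * h (X ω)) ∂ν := by
      rw [← integral_sub i1 i3]
      exact integral_congr_ae (Filter.Eventually.of_forall fun ω => by ring)
    rw [split1, split2, e2]
  have e1' : ∫ ω, A ω * (1 - π (X ω)) * h (X ω) ∂ν
      = ∫ ω, π (X ω) * (1 - π (X ω)) * h (X ω) ∂ν := by
    calc ∫ ω, A ω * (1 - π (X ω)) * h (X ω) ∂ν
        = ∫ ω, A ω * ((1 - π (X ω)) * h (X ω)) ∂ν := by
          exact integral_congr_ae (Filter.Eventually.of_forall fun ω => by ring)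
    _ = ∫ ω, π (X ω) * ((1 - π (X ω)) * h (X ω)) ∂ν := e1
    _ = ∫ ω, π (X ω) * (1 - π (X ω)) * h (X ω) ∂ν := by
          exact integral_congr_ae (Filter.Eventually.of_forall fun ω => by ring)
  exact ⟨e1'.trans eq3.symm, e1'⟩
end

section
/- Let (Ω, 𝔽, ν) be a probability space with Ω a standard Borel space, X : Ω → ℝ^p and A : Ω → {0,1} measurable, and Y₀, Y₁ : Ω → ℝ bounded measurable; set Y = A·Y₁ + (1−A)·Y₀. Assume there exist measurable π : ℝ^p → ℝ and c > 0 with π∘X a version of E_ν[A | σ(X)], c ≤ π∘X ≤ 1 − c ν-a.e., and assume (Y₀, Y₁) is conditionally independent of A given σ(X) under ν. Then for every measurable d : ℝ^p → {0,1}: E_ν[ 1{d(X) = A} · ( A/π(X) + (1−A)/(1−π(X)) ) · π(X)·(1 − π(X)) · Y ] = E_ν[ π(X)·(1 − π(X)) · ( d(X)·Y₁ + (1 − d(X))·Y₀ ) ]. That is, the overlap-weighted value estimator identifies E[Y(d(X)) π(X)(1−π(X))], the value of the rule d on the overlap-retargeted population. -/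
open MeasureTheory ProbabilityTheory
open scoped ENNReal NNReal

lemma integrable_of_ae_bound' {Ω : Type*} [MeasurableSpace Ω] {ν : Measure Ω}
    [IsFiniteMeasure ν] {h : Ω → ℝ} (hm : AEStronglyMeasurable h ν) (C : ℝ)
    (hb : ∀ᵐ ω ∂ν, |h ω| ≤ C) : Integrable h ν :=
  Integrable.mono' (integrable_const C) hm (by simpa [Real.norm_eq_abs] using hb)

lemma abs_mul_le_of_le' {a b A B : ℝ} (ha : |a| ≤ A) (hb : |b| ≤ B) : |a * b| ≤ A * B := by
  rw [abs_mul]; exact mul_le_mul ha hb (abs_nonneg _) ((abs_nonneg a).trans ha)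

lemma key_zero {Ω : Type*} {m' : MeasurableSpace Ω} [mΩ : MeasurableSpace Ω]
    [StandardBorelSpace Ω] (hm' : m' ≤ mΩ)
    (ν : Measure Ω) [IsProbabilityMeasure ν] {p : ℕ}
    {X : Ω → (Fin p → ℝ)} {A : Ω → ℝ} {f : Ω → ℝ × ℝ}
    (hX : Measurable X) (hA : Measurable A) (hf : Measurable f)
    (hXm' : @Measurable _ _ m' _ X)
    (hAbin : ∀ ω, A ω = 0 ∨ A ω = 1)
    {π : (Fin p → ℝ) → ℝ} (hπm : Measurable π)
    (hπver : (fun ω => π (X ω)) =ᵐ[ν] ν[A | m'])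
    (hπb : ∀ᵐ ω ∂ν, |π (X ω)| ≤ 1)
    (hindep : CondIndepFun m' hm' f A ν)
    {g : (Fin p → ℝ) → ℝ} (hgm : Measurable g) (hgb : ∀ᵐ ω ∂ν, |g (X ω)| ≤ 1)
    {φ : ℝ × ℝ → ℝ} (hφm : Measurable φ) (C : ℝ) (hφb : ∀ ω, |φ (f ω)| ≤ C) :
    ∫ ω, φ (f ω) * ((A ω - π (X ω)) * g (X ω)) ∂ν = 0 := by
  have hAb : ∀ ω, |A ω| ≤ 1 := by
    intro ω; rcases hAbin ω with h | h <;> simp [h]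
  haveI : SigmaFinite (ν.trim hm') := by infer_instance
  set ρ : Ω → ℝ := fun ω => (A ω - π (X ω)) * g (X ω) with hρdef
  have hρm : Measurable ρ := ((hA.sub (hπm.comp hX)).mul (hgm.comp hX))
  have hρb : ∀ᵐ ω ∂ν, |ρ ω| ≤ 2 := by
    filter_upwards [hπb, hgb] with ω h1 h2
    calc |ρ ω| = |A ω - π (X ω)| * |g (X ω)| := abs_mul _ _
      _ ≤ 2 * 1 := by
          gcongr
          calc |A ω - π (X ω)| ≤ |A ω| + |π (X ω)| := abs_sub _ _
            _ ≤ 1 + 1 := add_le_add (hAb ω) h1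
            _ = 2 := by norm_num
      _ = 2 := mul_one 2
  -- Step 1: indicator version
  have hind : ∀ s : Set (ℝ × ℝ), MeasurableSet s →
      ∫ ω, Set.indicator (f ⁻¹' s) (fun _ => (1:ℝ)) ω * ρ ω ∂ν = 0 := by
    intro s hs
    set I : Ω → ℝ := Set.indicator (f ⁻¹' s) (fun _ => (1:ℝ)) with hIdef
    have hIm : Measurable I := (measurable_const.indicator (hf hs))
    have hIb : ∀ ω, |I ω| ≤ 1 := by
      intro ω; by_cases h : f ω ∈ s <;> simp [hIdef, Set.indicator_apply, h]
    have hIA : (fun ω => I ω * A ω)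
        = Set.indicator (f ⁻¹' s ∩ A ⁻¹' {1}) (fun _ => (1:ℝ)) := by
      funext ω
      rcases hAbin ω with h | h <;>
        by_cases hfs : f ω ∈ s <;>
          simp [hIdef, Set.indicator_apply, hfs, h]
    have hfunA : (A ⁻¹' {1}).indicator (fun _ => (1:ℝ)) = A := by
      funext ω
      rcases hAbin ω with h | h <;> simp [Set.indicator_apply, h]
    have hA1 : (ν⟦A ⁻¹' {1} | m'⟧) = ν[A | m'] := by rw [hfunA]
    have hcond := (condIndepFun_iff_condExp_inter_preimage_eq_mul hf hA).mp hindep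
      s {1} hs (measurableSet_singleton 1)
    have hcond' : ν[fun ω => I ω * A ω | m']
        =ᵐ[ν] fun ω => (ν[I | m']) ω * π (X ω) := by
      rw [hIA]
      refine hcond.trans ?_
      rw [hA1]
      filter_upwards [hπver] with ω hω
      rw [← hω]
    -- integrabilities
    have iIA : Integrable (fun ω => I ω * A ω) ν := by
      refine integrable_of_ae_bound' ((hIm.mul hA).aestronglyMeasurable) 1 ?_
      filter_upwards with ω
      rw [abs_mul]
      calc |I ω| * |A ω| ≤ 1 * 1 := mul_le_mul (hIb ω) (hAb ω) (abs_nonneg _) zero_le_one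
        _ = 1 := one_mul 1
    have iI : Integrable I ν :=
      integrable_of_ae_bound' hIm.aestronglyMeasurable 1 (ae_of_all _ hIb)
    have iGIA : Integrable (fun ω => g (X ω) * (I ω * A ω)) ν := by
      refine integrable_of_ae_bound' (((hgm.comp hX).mul (hIm.mul hA)).aestronglyMeasurable) 1 ?_
      filter_upwards [hgb] with ω hg1
      rw [abs_mul, abs_mul]
      calc |g (X ω)| * (|I ω| * |A ω|) ≤ 1 * (1 * 1) :=
            mul_le_mul hg1 (mul_le_mul (hIb ω) (hAb ω) (abs_nonneg _) zero_le_one)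
              (by positivity) zero_le_one
        _ = 1 := by norm_num
    have iGPI : Integrable (fun ω => (g (X ω) * π (X ω)) * I ω) ν := by
      refine integrable_of_ae_bound'
        ((((hgm.comp hX).mul (hπm.comp hX)).mul hIm).aestronglyMeasurable) 1 ?_
      filter_upwards [hgb, hπb] with ω hg1 hπ1
      rw [abs_mul, abs_mul]
      calc |g (X ω)| * |π (X ω)| * |I ω| ≤ 1 * 1 * 1 :=
            mul_le_mul (mul_le_mul hg1 hπ1 (abs_nonneg _) zero_le_one) (hIb ω)
              (abs_nonneg _) (by positivity)
        _ = 1 := by norm_num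
    have hGm' : StronglyMeasurable[m'] (fun ω => g (X ω)) :=
      (hgm.comp hXm').stronglyMeasurable
    have hGPm' : StronglyMeasurable[m'] (fun ω => g (X ω) * π (X ω)) :=
      ((hgm.comp hXm').mul (hπm.comp hXm')).stronglyMeasurable
    have e1 := condExp_mul_of_stronglyMeasurable_left (μ := ν) hGm' iGIA iIA
    have e2 := condExp_mul_of_stronglyMeasurable_left (μ := ν) hGPm' iGPI iI
    have T1 : ∫ ω, g (X ω) * (I ω * A ω) ∂ν
        = ∫ ω, g (X ω) * π (X ω) * (ν[I | m']) ω ∂ν := by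
      rw [show (fun ω => g (X ω) * (I ω * A ω))
            = (fun ω => g (X ω)) * fun ω => I ω * A ω from rfl]
      rw [← integral_condExp hm']
      refine integral_congr_ae ?_
      refine e1.trans ?_
      filter_upwards [hcond'] with ω hω
      simp only [Pi.mul_apply]
      rw [hω]; ring
    have T2 : ∫ ω, (g (X ω) * π (X ω)) * I ω ∂ν
        = ∫ ω, g (X ω) * π (X ω) * (ν[I | m']) ω ∂ν := by
      rw [show (fun ω => (g (X ω) * π (X ω)) * I ω)
            = (fun ω => g (X ω) * π (X ω)) * I from rfl]
      rw [← integral_condExp hm']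
      refine integral_congr_ae ?_
      refine e2.trans ?_
      filter_upwards with ω
      simp
    have : ∫ ω, I ω * ρ ω ∂ν
        = ∫ ω, g (X ω) * (I ω * A ω) - (g (X ω) * π (X ω)) * I ω ∂ν := by
      refine integral_congr_ae (ae_of_all _ fun ω => ?_)
      simp only [hρdef]; ring
    rw [this, integral_sub iGIA iGPI, T1, T2, sub_self]
  -- Step 2: the two pushforward measures agree
  have iρ : Integrable ρ ν :=
    integrable_of_ae_bound' hρm.aestronglyMeasurable 2 hρb
  set μ₁ : Measure (ℝ × ℝ) :=
    (ν.withDensity fun ω => ((ρ ω).toNNReal : ℝ≥0∞)).map f with hμ₁def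
  set μ₂ : Measure (ℝ × ℝ) :=
    (ν.withDensity fun ω => ((-ρ ω).toNNReal : ℝ≥0∞)).map f with hμ₂def
  have hρp : Measurable fun ω => (ρ ω).toNNReal := measurable_real_toNNReal.comp hρm
  have hρn : Measurable fun ω => (-ρ ω).toNNReal := measurable_real_toNNReal.comp hρm.neg
  have hμeq : μ₁ = μ₂ := by
    ext s hs
    rw [hμ₁def, hμ₂def, Measure.map_apply hf hs, Measure.map_apply hf hs,
      withDensity_apply _ (hf hs), withDensity_apply _ (hf hs)]
    have hzero : ∫ ω in f ⁻¹' s, ρ ω ∂ν = 0 := by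
      rw [← hind s hs]
      rw [← integral_indicator (hf hs)]
      refine integral_congr_ae (ae_of_all _ fun ω => ?_)
      by_cases h : f ω ∈ s <;> simp [Set.indicator_apply, h]
    have iρr : Integrable ρ (ν.restrict (f ⁻¹' s)) := iρ.restrict
    have heq := integral_eq_lintegral_pos_part_sub_lintegral_neg_part iρr
    rw [hzero] at heq
    have h1 : (∫⁻ ω in f ⁻¹' s, ENNReal.ofReal (ρ ω) ∂ν) ≠ ⊤ := by
      refine (lt_of_le_of_lt ?_ iρr.2).ne
      refine lintegral_mono fun ω => ?_
      rw [← ofReal_norm_eq_enorm]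
      exact ENNReal.ofReal_le_ofReal (le_abs_self _)
    have h2 : (∫⁻ ω in f ⁻¹' s, ENNReal.ofReal (-ρ ω) ∂ν) ≠ ⊤ := by
      refine (lt_of_le_of_lt ?_ iρr.2).ne
      refine lintegral_mono fun ω => ?_
      rw [← ofReal_norm_eq_enorm]
      exact ENNReal.ofReal_le_ofReal (neg_le_abs _)
    have := sub_eq_zero.mp heq.symm
    have h3 : (∫⁻ ω in f ⁻¹' s, ENNReal.ofReal (ρ ω) ∂ν)
        = ∫⁻ ω in f ⁻¹' s, ENNReal.ofReal (-ρ ω) ∂ν :=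
      (ENNReal.toReal_eq_toReal_iff' h1 h2).mp this
    simpa [ENNReal.ofReal] using h3
  -- Step 3: conclude
  have hcoe : ∀ r : ℝ, |r| ≤ 2 → ((r.toNNReal : ℝ)) ≤ 2 := by
    intro r hr
    rw [Real.coe_toNNReal']
    exact max_le (le_trans (le_abs_self _) hr) (by norm_num)
  have hint1 : Integrable (fun ω => (((ρ ω).toNNReal : ℝ) * φ (f ω))) ν := by
    refine integrable_of_ae_bound'
      ((((measurable_real_toNNReal.comp hρm).coe_nnreal_real).mul
        (hφm.comp hf)).aestronglyMeasurable) (2 * |C|) ?_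
    filter_upwards [hρb] with ω hω
    rw [abs_mul]
    refine mul_le_mul ?_ ((hφb ω).trans (le_abs_self C)) (abs_nonneg _) (by norm_num)
    rw [abs_of_nonneg (ρ ω).toNNReal.coe_nonneg]
    exact hcoe _ hω
  have hint2 : Integrable (fun ω => ((((-ρ ω)).toNNReal : ℝ) * φ (f ω))) ν := by
    refine integrable_of_ae_bound'
      ((((measurable_real_toNNReal.comp hρm.neg).coe_nnreal_real).mul
        (hφm.comp hf)).aestronglyMeasurable) (2 * |C|) ?_
    filter_upwards [hρb] with ω hω
    rw [abs_mul]
    refine mul_le_mul ?_ ((hφb ω).trans (le_abs_self C)) (abs_nonneg _) (by norm_num)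
    rw [abs_of_nonneg ((-ρ ω)).toNNReal.coe_nonneg]
    exact hcoe _ (by rwa [abs_neg])
  have E1 : ∫ x, φ x ∂μ₁ = ∫ ω, ((ρ ω).toNNReal : ℝ) * φ (f ω) ∂ν := by
    rw [hμ₁def, integral_map hf.aemeasurable hφm.aestronglyMeasurable,
      integral_withDensity_eq_integral_smul hρp]
    refine integral_congr_ae (ae_of_all _ fun ω => ?_)
    simp [NNReal.smul_def]
  have E2 : ∫ x, φ x ∂μ₂ = ∫ ω, ((-ρ ω).toNNReal : ℝ) * φ (f ω) ∂ν := by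
    rw [hμ₂def, integral_map hf.aemeasurable hφm.aestronglyMeasurable,
      integral_withDensity_eq_integral_smul hρn]
    refine integral_congr_ae (ae_of_all _ fun ω => ?_)
    simp [NNReal.smul_def]
  have final : ∫ ω, φ (f ω) * ρ ω ∂ν = ∫ x, φ x ∂μ₁ - ∫ x, φ x ∂μ₂ := by
    rw [E1, E2, ← integral_sub hint1 hint2]
    refine integral_congr_ae (ae_of_all _ fun ω => ?_)
    have : ((ρ ω).toNNReal : ℝ) - ((-ρ ω).toNNReal : ℝ) = ρ ω := by
      rw [Real.coe_toNNReal', Real.coe_toNNReal']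
      rcases le_total 0 (ρ ω) with h | h
      · rw [max_eq_left h, max_eq_right (neg_nonpos.mpr h)]; ring
      · rw [max_eq_right h, max_eq_left (neg_nonneg.mpr h)]; ring
    calc φ (f ω) * ρ ω = (((ρ ω).toNNReal : ℝ) - ((-ρ ω).toNNReal : ℝ)) * φ (f ω) := by
          rw [this]; ring
      _ = ((ρ ω).toNNReal : ℝ) * φ (f ω) - ((-ρ ω).toNNReal : ℝ) * φ (f ω) := by ring
  calc ∫ ω, φ (f ω) * ((A ω - π (X ω)) * g (X ω)) ∂ν
      = ∫ ω, φ (f ω) * ρ ω ∂ν := rfl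
    _ = ∫ x, φ x ∂μ₁ - ∫ x, φ x ∂μ₂ := final
    _ = 0 := by rw [hμeq, sub_self]

/-- **The overlap-weighted value estimator identifies the overlap-retargeted value.** Under
SUTVA, unconfoundedness and positivity of the propensity score, for every measurable rule `d`
taking values in `{0,1}`:
`E[1{d(X)=A}·(A/π(X) + (1−A)/(1−π(X)))·π(X)(1−π(X))·Y]
  = E[π(X)(1−π(X))·(d(X)Y₁ + (1−d(X))Y₀)]`. -/
theorem overlap_weighted_value_identification
    {Ω : Type*} [MeasurableSpace Ω] [StandardBorelSpace Ω]
    (ν : Measure Ω) [IsProbabilityMeasure ν] {p : ℕ}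
    (X : Ω → (Fin p → ℝ)) (A : Ω → ℝ) (Y0 Y1 : Ω → ℝ)
    (hX : Measurable X) (hA : Measurable A)
    (hY0m : Measurable Y0) (hY1m : Measurable Y1)
    (hAbin : ∀ ω, A ω = 0 ∨ A ω = 1)
    (hY0b : ∃ C, ∀ ω, |Y0 ω| ≤ C) (hY1b : ∃ C, ∀ ω, |Y1 ω| ≤ C)
    (π : (Fin p → ℝ) → ℝ) (hπm : Measurable π) (c : ℝ) (hc : 0 < c)
    (hπver : (fun ω => π (X ω)) =ᵐ[ν] ν[A | MeasurableSpace.comap X inferInstance])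
    (hπb : ∀ᵐ ω ∂ν, c ≤ π (X ω) ∧ π (X ω) ≤ 1 - c)
    (hunconf : CondIndepFun (MeasurableSpace.comap X inferInstance) hX.comap_le
      (fun ω => (Y0 ω, Y1 ω)) A ν)
    (d : (Fin p → ℝ) → ℝ) (hdm : Measurable d) (hdbin : ∀ x, d x = 0 ∨ d x = 1) :
    ∫ ω, (if d (X ω) = A ω then 1 else 0)
        * (A ω / π (X ω) + (1 - A ω) / (1 - π (X ω)))
        * (π (X ω) * (1 - π (X ω)))
        * (A ω * Y1 ω + (1 - A ω) * Y0 ω) ∂ν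
      = ∫ ω, π (X ω) * (1 - π (X ω))
          * (d (X ω) * Y1 ω + (1 - d (X ω)) * Y0 ω) ∂ν := by
  obtain ⟨C0, hY0b'⟩ := hY0b
  obtain ⟨C1, hY1b'⟩ := hY1b
  have hY0b : ∀ ω, |Y0 ω| ≤ |C0| := fun ω => (hY0b' ω).trans (le_abs_self C0)
  have hY1b : ∀ ω, |Y1 ω| ≤ |C1| := fun ω => (hY1b' ω).trans (le_abs_self C1)
  have hf : Measurable (fun ω => (Y0 ω, Y1 ω)) := hY0m.prodMk hY1m
  have hAb : ∀ ω, |A ω| ≤ 1 := by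
    intro ω; rcases hAbin ω with h | h <;> simp [h]
  have hdb : ∀ x, |d x| ≤ 1 := by
    intro x; rcases hdbin x with h | h <;> simp [h]
  have hdb' : ∀ x, |1 - d x| ≤ 1 := by
    intro x; rcases hdbin x with h | h <;> simp [h]
  have hπb1 : ∀ᵐ ω ∂ν, |π (X ω)| ≤ 1 := by
    filter_upwards [hπb] with ω hω
    rw [abs_le]; constructor <;> [linarith [hω.1]; linarith [hω.2]]
  have hπb1' : ∀ᵐ ω ∂ν, |1 - π (X ω)| ≤ 1 := by
    filter_upwards [hπb] with ω hω
    rw [abs_le]; constructor <;> [linarith [hω.2]; linarith [hω.1]]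
  -- the two key orthogonality identities
  have K1 : ∫ ω, Y1 ω * ((A ω - π (X ω)) * (d (X ω) * (1 - π (X ω)))) ∂ν = 0 := by
    have hgb : ∀ᵐ ω ∂ν, |d (X ω) * (1 - π (X ω))| ≤ 1 := by
      filter_upwards [hπb1'] with ω hω
      simpa using abs_mul_le_of_le' (hdb (X ω)) hω
    exact key_zero hX.comap_le ν hX hA hf (fun s hs => ⟨s, hs, rfl⟩) hAbin hπm hπver hπb1
      hunconf (g := fun x => d x * (1 - π x)) (hdm.mul (measurable_const.sub hπm)) hgb
      (φ := Prod.snd) measurable_snd |C1| (fun ω => hY1b ω)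
  have K0 : ∫ ω, Y0 ω * ((A ω - π (X ω)) * ((1 - d (X ω)) * π (X ω))) ∂ν = 0 := by
    have hgb : ∀ᵐ ω ∂ν, |(1 - d (X ω)) * π (X ω)| ≤ 1 := by
      filter_upwards [hπb1] with ω hω
      simpa using abs_mul_le_of_le' (hdb' (X ω)) hω
    exact key_zero hX.comap_le ν hX hA hf (fun s hs => ⟨s, hs, rfl⟩) hAbin hπm hπver hπb1
      hunconf (g := fun x => (1 - d x) * π x) ((measurable_const.sub hdm).mul hπm) hgb
      (φ := Prod.fst) measurable_fst |C0| (fun ω => hY0b ω)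
  -- pointwise a.e. identity
  have hptwise : ∀ᵐ ω ∂ν,
      (if d (X ω) = A ω then 1 else 0)
          * (A ω / π (X ω) + (1 - A ω) / (1 - π (X ω)))
          * (π (X ω) * (1 - π (X ω)))
          * (A ω * Y1 ω + (1 - A ω) * Y0 ω)
        = π (X ω) * (1 - π (X ω)) * (d (X ω) * Y1 ω + (1 - d (X ω)) * Y0 ω)
          + (Y1 ω * ((A ω - π (X ω)) * (d (X ω) * (1 - π (X ω))))
            - Y0 ω * ((A ω - π (X ω)) * ((1 - d (X ω)) * π (X ω)))) := by
    filter_upwards [hπb] with ω hω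
    have hπ0 : π (X ω) ≠ 0 := (lt_of_lt_of_le hc hω.1).ne'
    have hπ1 : 1 - π (X ω) ≠ 0 := by
      have : π (X ω) < 1 := by linarith [hω.2]
      intro h; apply this.ne; linarith
    rcases hAbin ω with h1 | h1 <;> rcases hdbin (X ω) with h2 | h2 <;>
      rw [h1, h2] <;> norm_num <;> (try field_simp) <;> ring
  -- integrabilities
  have iR : Integrable
      (fun ω => π (X ω) * (1 - π (X ω)) * (d (X ω) * Y1 ω + (1 - d (X ω)) * Y0 ω)) ν := by
    refine integrable_of_ae_bound'
      ((((hπm.comp hX).mul (measurable_const.sub (hπm.comp hX))).mul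
        (((hdm.comp hX).mul hY1m).add
          ((measurable_const.sub (hdm.comp hX)).mul hY0m))).aestronglyMeasurable)
      (1 * (|C1| + |C0|)) ?_
    filter_upwards [hπb1, hπb1'] with ω h1 h2
    refine abs_mul_le_of_le' (by simpa using abs_mul_le_of_le' h1 h2) ?_
    calc |d (X ω) * Y1 ω + (1 - d (X ω)) * Y0 ω|
        ≤ |d (X ω) * Y1 ω| + |(1 - d (X ω)) * Y0 ω| := abs_add_le _ _
      _ ≤ 1 * |C1| + 1 * |C0| :=
          add_le_add (abs_mul_le_of_le' (hdb _) (hY1b ω)) (abs_mul_le_of_le' (hdb' _) (hY0b ω))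
      _ = |C1| + |C0| := by ring
  have iK1 : Integrable
      (fun ω => Y1 ω * ((A ω - π (X ω)) * (d (X ω) * (1 - π (X ω))))) ν := by
    refine integrable_of_ae_bound'
      ((hY1m.mul ((hA.sub (hπm.comp hX)).mul
        ((hdm.comp hX).mul (measurable_const.sub (hπm.comp hX))))).aestronglyMeasurable)
      (|C1| * (2 * 1)) ?_
    filter_upwards [hπb1, hπb1'] with ω h1 h2
    refine abs_mul_le_of_le' (hY1b ω) (abs_mul_le_of_le' ?_ ?_)
    · calc |A ω - π (X ω)| ≤ |A ω| + |π (X ω)| := abs_sub _ _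
        _ ≤ 1 + 1 := add_le_add (hAb ω) h1
        _ = 2 := by norm_num
    · simpa using abs_mul_le_of_le' (hdb (X ω)) h2
  have iK0 : Integrable
      (fun ω => Y0 ω * ((A ω - π (X ω)) * ((1 - d (X ω)) * π (X ω)))) ν := by
    refine integrable_of_ae_bound'
      ((hY0m.mul ((hA.sub (hπm.comp hX)).mul
        ((measurable_const.sub (hdm.comp hX)).mul (hπm.comp hX)))).aestronglyMeasurable)
      (|C0| * (2 * 1)) ?_
    filter_upwards [hπb1] with ω h1
    refine abs_mul_le_of_le' (hY0b ω) (abs_mul_le_of_le' ?_ ?_)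
    · calc |A ω - π (X ω)| ≤ |A ω| + |π (X ω)| := abs_sub _ _
        _ ≤ 1 + 1 := add_le_add (hAb ω) h1
        _ = 2 := by norm_num
    · simpa using abs_mul_le_of_le' (hdb' (X ω)) h1
  calc ∫ ω, (if d (X ω) = A ω then 1 else 0)
        * (A ω / π (X ω) + (1 - A ω) / (1 - π (X ω)))
        * (π (X ω) * (1 - π (X ω)))
        * (A ω * Y1 ω + (1 - A ω) * Y0 ω) ∂ν
      = ∫ ω, π (X ω) * (1 - π (X ω)) * (d (X ω) * Y1 ω + (1 - d (X ω)) * Y0 ω)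
          + (Y1 ω * ((A ω - π (X ω)) * (d (X ω) * (1 - π (X ω))))
            - Y0 ω * ((A ω - π (X ω)) * ((1 - d (X ω)) * π (X ω)))) ∂ν :=
        integral_congr_ae hptwise
    _ = ∫ ω, π (X ω) * (1 - π (X ω)) * (d (X ω) * Y1 ω + (1 - d (X ω)) * Y0 ω) ∂ν
          + (∫ ω, Y1 ω * ((A ω - π (X ω)) * (d (X ω) * (1 - π (X ω)))) ∂ν
            - ∫ ω, Y0 ω * ((A ω - π (X ω)) * ((1 - d (X ω)) * π (X ω))) ∂ν) := by
        have isub : Integrable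
            (fun ω => Y1 ω * ((A ω - π (X ω)) * (d (X ω) * (1 - π (X ω))))
              - Y0 ω * ((A ω - π (X ω)) * ((1 - d (X ω)) * π (X ω)))) ν := iK1.sub iK0
        rw [integral_add iR isub, integral_sub iK1 iK0]
    _ = ∫ ω, π (X ω) * (1 - π (X ω)) * (d (X ω) * Y1 ω + (1 - d (X ω)) * Y0 ω) ∂ν := by
        rw [K1, K0]; ring
end

section
/- Let (𝒳, 𝔄, ν) be a probability space and π : 𝒳 → ℝ measurable with 0 < π < 1 ν-a.e., and suppose C_π = ∫ π(1−π) dν satisfies 0 < C_π < ∞. Let g : 𝒳 → [0, ∞) be measurable with ∫ g dν = 1 and with g²/(π(1−π)) ν-integrable. Then ∫ g² / (π(1−π)) dν ≥ 1/C_π, and equality holds for the overlap choice g = π(1−π)/C_π. That is, among all retargeting density ratios g with unit mean, the overlap density ratio proportional to π(x)(1−π(x)) minimizes the variance proxy ∫ g²/(π(1−π)) dν. -/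
open MeasureTheory

/-- **Optimality of the overlap retargeting density ratio.** Among all nonnegative retargeting
density ratios `g` with `∫ g dν = 1`, the variance proxy `∫ g²/(π(1−π)) dν` is at least
`1/C_π` where `C_π = ∫ π(1−π) dν`, and equality holds for the overlap choice
`g = π(1−π)/C_π`. -/
theorem overlap_density_ratio_minimizes_variance_proxy
    {𝒳 : Type*} [MeasurableSpace 𝒳] (ν : Measure 𝒳) [IsProbabilityMeasure ν]
    (π : 𝒳 → ℝ) (hπm : Measurable π)
    (hπ01 : ∀ᵐ x ∂ν, 0 < π x ∧ π x < 1)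
    (hπint : Integrable (fun x => π x * (1 - π x)) ν)
    (C : ℝ) (hC : C = ∫ x, π x * (1 - π x) ∂ν) (hCpos : 0 < C)
    (g : 𝒳 → ℝ) (hgm : Measurable g) (hg0 : ∀ x, 0 ≤ g x)
    (hg1 : ∫ x, g x ∂ν = 1)
    (hgint : Integrable (fun x => g x ^ 2 / (π x * (1 - π x))) ν) :
    1 / C ≤ ∫ x, g x ^ 2 / (π x * (1 - π x)) ∂ν
    ∧ ∫ x, (π x * (1 - π x) / C) ^ 2 / (π x * (1 - π x)) ∂ν = 1 / C := by
  set p : 𝒳 → ℝ := fun x => π x * (1 - π x) with hp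
  have hppos : ∀ᵐ x ∂ν, 0 < p x := by
    filter_upwards [hπ01] with x hx
    exact mul_pos hx.1 (by linarith [hx.2])
  -- RHS function for the AM-GM bound
  have hF : Integrable (fun x => (C * (g x ^ 2 / p x) + p x / C) / 2) ν := by
    exact ((hgint.const_mul C).add (hπint.div_const C)).div_const 2
  -- pointwise a.e. bound: g ≤ (C g²/p + p/C)/2
  have hbound : ∀ᵐ x ∂ν, g x ≤ (C * (g x ^ 2 / p x) + p x / C) / 2 := by
    filter_upwards [hppos] with x hx
    have key : 0 ≤ (C * g x - p x) ^ 2 / (C * p x) :=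
      div_nonneg (sq_nonneg _) (le_of_lt (mul_pos hCpos hx))
    have hexp : (C * g x - p x) ^ 2 / (C * p x)
        = C * (g x ^ 2 / p x) + p x / C - 2 * g x := by
      field_simp
      ring
    nlinarith [key, hexp]
  have hgInt : Integrable g ν := by
    refine Integrable.mono' hF (hgm.aestronglyMeasurable) ?_
    filter_upwards [hbound] with x hx
    rwa [Real.norm_eq_abs, abs_of_nonneg (hg0 x)]
  have hineq : (1 : ℝ) ≤ (C * (∫ x, g x ^ 2 / p x ∂ν) + 1) / 2 := by
    have := integral_mono_ae hgInt hF hbound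
    rw [hg1] at this
    have hint2 : ∫ x, (C * (g x ^ 2 / p x) + p x / C) / 2 ∂ν
        = (C * (∫ x, g x ^ 2 / p x ∂ν) + 1) / 2 := by
      rw [integral_div, integral_add (hgint.const_mul C) (hπint.div_const C),
        integral_const_mul, integral_div, ← hC, div_self (ne_of_gt hCpos)]
    rw [hint2] at this
    exact this
  constructor
  · rw [div_le_iff₀ hCpos]
    nlinarith [hineq]
  · have hcongr : ∫ x, (p x / C) ^ 2 / p x ∂ν = ∫ x, p x / C ^ 2 ∂ν := by
      refine integral_congr_ae ?_
      filter_upwards [hppos] with x hx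
      field_simp
    rw [hcongr, integral_div, ← hC, sq]
    rw [div_eq_div_iff (by positivity) (ne_of_gt hCpos)]
    ring
end
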